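/- Let X be a real n×p matrix with rank(X) = p, X† = (XᵀX)⁻¹Xᵀ, and β₀ ∈ ℝᵖ. On a probability space, let S : Ω → ℝ^{r×n} (p ≤ r ≤ n) be a random matrix, let Y(ω) be the Moore–Penrose inverse of S(ω)X for each ω, and set P(ω) = X Y(ω) S(ω) and P₀(ω) = Y(ω)S(ω)X. Let ε : Ω → ℝⁿ be independent of S with E[ε_i] = 0 and E[ε_iε_j] = σ²δ_{ij} (σ > 0), and assume all relevant entries are square-integrable. Set y = Xβ₀ + ε and β̃ = YSy. Then the total covariance matrix of β̃ satisfies, entrywise, V[β̃] = σ² X† E[PPᵀ] (X†)ᵀ + V[P₀β₀], where E[PPᵀ] is the entrywise expectation of P(ω)P(ω)ᵀ and V[P₀β₀] is the covariance matrix of the random vector ω ↦ P₀(ω)β₀. Equivalently, V[β̃] = σ²(XᵀX)⁻¹ + σ² X†(E[PPᵀ] − P_X)(X†)ᵀ + V[P₀β₀] with P_X = X(XᵀX)⁻¹Xᵀ. -/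

import Mathlib

open Matrix MeasureTheory

open Filter Topology ProbabilityTheory


noncomputable instance matMeasurableSpace {m n α : Type*} [MeasurableSpace α] :
    MeasurableSpace (Matrix m n α) := inferInstanceAs (MeasurableSpace (m → n → α))

instance matBorelSpace {m n : Type*} [Countable m] [Countable n] :
    BorelSpace (Matrix m n ℝ) := inferInstanceAs (BorelSpace (m → n → ℝ))

instance matPolishSpace {m n : Type*} [Countable m] [Countable n] :
    PolishSpace (Matrix m n ℝ) := inferInstanceAs (PolishSpace (m → n → ℝ))

lemma auxPosDefAdd {m : ℕ} {B : Matrix (Fin m) (Fin m) ℝ} (hB : B.PosSemidef)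
    {δ : ℝ} (hδ : 0 < δ) : (B + δ • 1).PosDef := by
  refine Matrix.PosDef.posSemidef_add hB ?_
  have h : (δ • (1 : Matrix (Fin m) (Fin m) ℝ)) = Matrix.diagonal (fun _ => δ) := by
    ext i j
    by_cases h : i = j <;> simp [Matrix.one_apply, h, Matrix.diagonal]
  rw [h]
  exact Matrix.PosDef.diagonal (fun _ => hδ)

lemma auxDetUnit {m : ℕ} {B : Matrix (Fin m) (Fin m) ℝ} (hB : B.PosSemidef)
    {δ : ℝ} (hδ : 0 < δ) : IsUnit (B + δ • 1).det :=
  Matrix.isUnit_iff_isUnit_det _ |>.mp (auxPosDefAdd hB hδ).isUnit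

lemma auxPSDsmul {m : ℕ} {W : Matrix (Fin m) (Fin m) ℝ} (hW : W.PosSemidef)
    {δ : ℝ} (hδ : 0 < δ) : (δ • W).PosSemidef := by
  refine Matrix.PosSemidef.of_dotProduct_mulVec_nonneg ?_ ?_
  · show (δ • W)ᴴ = δ • W
    rw [Matrix.conjTranspose_smul, hW.1.eq]
    norm_num
  · intro x
    rw [Matrix.smul_mulVec, dotProduct_smul, smul_eq_mul]
    exact mul_nonneg hδ.le (hW.dotProduct_mulVec_nonneg x)

lemma auxDetUnit2 {m : ℕ} {W : Matrix (Fin m) (Fin m) ℝ} (hW : W.PosSemidef)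
    {δ : ℝ} (hδ : 0 < δ) : IsUnit (1 + δ • W).det :=
  Matrix.isUnit_iff_isUnit_det _ |>.mp
    (Matrix.PosDef.add_posSemidef Matrix.PosDef.one (auxPSDsmul hW hδ)).isUnit

lemma auxPSD {a b : ℕ} (A : Matrix (Fin a) (Fin b) ℝ) : (A * Aᵀ).PosSemidef := by
  have := Matrix.posSemidef_self_mul_conjTranspose A
  rwa [Matrix.conjTranspose_eq_transpose_of_trivial] at this

lemma penroseSolve {r p : ℕ} (A : Matrix (Fin r) (Fin p) ℝ) (Z : Matrix (Fin p) (Fin r) ℝ)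
    (h1 : A * Z * A = A) (h2 : Z * (A * Z) = Z)
    (h3 : (A * Z)ᵀ = A * Z) (h4 : (Z * A)ᵀ = Z * A) {δ : ℝ} (hδ : 0 < δ) :
    Aᵀ * (A * Aᵀ + δ • 1)⁻¹ = (1 + δ • (Z * Zᵀ))⁻¹ * Z := by
  have e1 : Zᵀ * Aᵀ = A * Z := by rw [← Matrix.transpose_mul, h3]
  have e2 : (Z * Zᵀ) * Aᵀ = Z := by rw [Matrix.mul_assoc, e1, h2]
  have e3 : Z * (A * Aᵀ) = Aᵀ := by
    rw [← Matrix.mul_assoc, ← h4, ← Matrix.transpose_mul, ← Matrix.mul_assoc, h1]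
  have hid : (1 + δ • (Z * Zᵀ)) * Aᵀ = Z * (A * Aᵀ + δ • 1) := by
    rw [Matrix.add_mul, Matrix.mul_add, Matrix.one_mul, Matrix.smul_mul, Matrix.mul_smul, e2, e3,
      Matrix.mul_one]
  have hB : IsUnit (A * Aᵀ + δ • 1).det := auxDetUnit (auxPSD A) hδ
  have hC : IsUnit (1 + δ • (Z * Zᵀ)).det := auxDetUnit2 (auxPSD Z) hδ
  have key := congrArg (fun M => (1 + δ • (Z * Zᵀ))⁻¹ * M * (A * Aᵀ + δ • 1)⁻¹) hid
  rw [← Matrix.mul_assoc, Matrix.nonsing_inv_mul _ hC, Matrix.one_mul] at key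
  rw [key, Matrix.mul_assoc ((1 + δ • (Z * Zᵀ))⁻¹) (Z * (A * Aᵀ + δ • 1)) ((A * Aᵀ + δ • 1)⁻¹),
    Matrix.mul_assoc Z (A * Aᵀ + δ • 1) ((A * Aᵀ + δ • 1)⁻¹),
    Matrix.mul_nonsing_inv _ hB, Matrix.mul_one]

lemma penroseTendsto {r p : ℕ} (A : Matrix (Fin r) (Fin p) ℝ) (Z : Matrix (Fin p) (Fin r) ℝ)
    (h1 : A * Z * A = A) (h2 : Z * (A * Z) = Z)
    (h3 : (A * Z)ᵀ = A * Z) (h4 : (Z * A)ᵀ = Z * A) :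
    Tendsto (fun k : ℕ => Aᵀ * (A * Aᵀ + (((k : ℝ) + 1)⁻¹) • 1)⁻¹) atTop (𝓝 Z) := by
  have hδ : ∀ k : ℕ, (0:ℝ) < ((k : ℝ) + 1)⁻¹ := fun k => by positivity
  have heq : (fun k : ℕ => Aᵀ * (A * Aᵀ + (((k : ℝ) + 1)⁻¹) • 1)⁻¹)
      = fun k : ℕ => (1 + (((k : ℝ) + 1)⁻¹) • (Z * Zᵀ))⁻¹ * Z := by
    funext k
    exact penroseSolve A Z h1 h2 h3 h4 (hδ k)
  rw [heq]
  -- continuity argument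
  have hδ0 : Tendsto (fun k : ℕ => ((k : ℝ) + 1)⁻¹) atTop (𝓝 0) :=
    tendsto_one_div_add_atTop_nhds_zero_nat.congr (by intro k; rw [one_div])
  have hC : Tendsto (fun k : ℕ => (1 : Matrix (Fin p) (Fin p) ℝ) + (((k : ℝ) + 1)⁻¹) • (Z * Zᵀ))
      atTop (𝓝 (1 : Matrix (Fin p) (Fin p) ℝ)) := by
    have hc : Continuous (fun δ : ℝ => (1 : Matrix (Fin p) (Fin p) ℝ) + δ • (Z * Zᵀ)) := by
      continuity
    have h := (hc.tendsto 0).comp hδ0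
    simp only [Function.comp_def, zero_smul, add_zero] at h
    exact h
  set C : ℕ → Matrix (Fin p) (Fin p) ℝ :=
    fun k => (1 : Matrix (Fin p) (Fin p) ℝ) + (((k : ℝ) + 1)⁻¹) • (Z * Zᵀ) with hCdef
  have hdet : Tendsto (fun k => (C k).det) atTop (𝓝 1) := by
    have h := ((continuous_id.matrix_det).tendsto (1 : Matrix (Fin p) (Fin p) ℝ)).comp hC
    simpa [Function.comp_def] using h
  have hinv : Tendsto (fun k => Ring.inverse (C k).det) atTop (𝓝 1) := by
    simp only [Ring.inverse_eq_inv]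
    have := hdet.inv₀ one_ne_zero
    simpa using this
  have hadjZ : Tendsto (fun k => ((C k).adjugate * Z)) atTop (𝓝 Z) := by
    have hc : Continuous (fun M : Matrix (Fin p) (Fin p) ℝ => M.adjugate * Z) :=
      (continuous_id.matrix_adjugate).matrix_mul continuous_const
    have h := (hc.tendsto (1 : Matrix (Fin p) (Fin p) ℝ)).comp hC
    simpa [Matrix.adjugate_one, Function.comp_def] using h
  refine tendsto_pi_nhds.mpr ?_
  intro i
  rw [tendsto_pi_nhds]
  intro j
  have hentry : ∀ k, ((C k)⁻¹ * Z) i j = Ring.inverse (C k).det * ((C k).adjugate * Z) i j := by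
    intro k
    rw [Matrix.inv_def, Matrix.smul_mul, Matrix.smul_apply, smul_eq_mul]
  show Tendsto (fun k => ((C k)⁻¹ * Z) i j) atTop (𝓝 (Z i j))
  simp only [hentry]
  have hZij : Tendsto (fun k => ((C k).adjugate * Z) i j) atTop (𝓝 (Z i j)) := by
    have hcij : Continuous (fun M : Matrix (Fin p) (Fin r) ℝ => M i j) :=
      continuous_id.matrix_elem i j
    exact (hcij.tendsto Z).comp hadjZ
  have := hinv.mul hZij
  simpa using this

lemma existsMeasurablePinv {r n p : ℕ} (X : Matrix (Fin n) (Fin p) ℝ) :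
    ∃ ψ : Matrix (Fin r) (Fin n) ℝ → Matrix (Fin p) (Fin n) ℝ, Measurable ψ ∧
      ∀ (M : Matrix (Fin r) (Fin n) ℝ) (Z : Matrix (Fin p) (Fin r) ℝ),
        (M * X) * Z * (M * X) = M * X → Z * ((M * X) * Z) = Z →
        ((M * X) * Z)ᵀ = (M * X) * Z → (Z * (M * X))ᵀ = Z * (M * X) →
        ψ M = Z * M := by
  classical
  set Φ : ℕ → Matrix (Fin r) (Fin n) ℝ → Matrix (Fin p) (Fin r) ℝ :=
    fun k M => (M * X)ᵀ * ((M * X) * (M * X)ᵀ + (((k : ℝ) + 1)⁻¹) • 1)⁻¹ with hΦdef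
  have hMX : Continuous (fun M : Matrix (Fin r) (Fin n) ℝ => M * X) :=
    continuous_id.matrix_mul continuous_const
  have hΦ : ∀ k, Measurable (Φ k) := by
    intro k
    set B : Matrix (Fin r) (Fin n) ℝ → Matrix (Fin r) (Fin r) ℝ :=
      fun M => (M * X) * (M * X)ᵀ + (((k : ℝ) + 1)⁻¹) • 1 with hBdef
    have hB : Continuous B := ((hMX.matrix_mul hMX.matrix_transpose).add continuous_const)
    have hdetinv : Measurable (fun M => Ring.inverse ((B M).det)) := by
      simp only [Ring.inverse_eq_inv]
      exact (hB.matrix_det).measurable.inv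
    apply measurable_pi_lambda
    intro i
    apply measurable_pi_lambda
    intro j
    have hrw : (fun M => Φ k M i j)
        = fun M => ∑ l, (M * X)ᵀ i l * (Ring.inverse (B M).det * (B M).adjugate l j) := by
      funext M
      simp only [hΦdef, hBdef, Matrix.mul_apply, Matrix.inv_def, Matrix.smul_apply, smul_eq_mul]
    show Measurable (fun M => Φ k M i j)
    rw [hrw]
    apply Finset.measurable_sum
    intro l _
    exact ((hMX.matrix_transpose.matrix_elem i l).measurable).mul
      (hdetinv.mul ((hB.matrix_adjugate.matrix_elem l j).measurable))
  set E := {M : Matrix (Fin r) (Fin n) ℝ | ∃ L, Tendsto (fun k => Φ k M) atTop (𝓝 L)} with hEdef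
  have hE : MeasurableSet E := measurableSet_exists_tendsto hΦ
  set Glim : Matrix (Fin r) (Fin n) ℝ → Matrix (Fin p) (Fin r) ℝ :=
    fun M => if h : M ∈ E then h.choose else 0 with hGdef
  have hg : ∀ k, Measurable (fun M => if M ∈ E then Φ k M else 0) := fun k =>
    Measurable.ite hE (hΦ k) measurable_const
  have htend : Tendsto (fun k M => if M ∈ E then Φ k M else 0) atTop (𝓝 Glim) := by
    rw [tendsto_pi_nhds]
    intro M
    by_cases h : M ∈ E
    · simp only [h, if_true, hGdef, dif_pos h]
      exact h.choose_spec
    · simp only [h, if_false, hGdef, dif_neg h]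
      exact tendsto_const_nhds
  have hGlim : Measurable Glim := measurable_of_tendsto_metrizable' atTop hg htend
  refine ⟨fun M => Glim M * M, ?_, ?_⟩
  · apply measurable_pi_lambda
    intro i
    apply measurable_pi_lambda
    intro j
    have hrw : (fun M => (Glim M * M) i j) = fun M => ∑ l, Glim M i l * M l j := by
      funext M
      simp [Matrix.mul_apply]
    show Measurable fun M => (Glim M * M) i j
    rw [hrw]
    apply Finset.measurable_sum
    intro l _
    have h1 : Measurable fun M : Matrix (Fin r) (Fin n) ℝ => Glim M i l :=
      (measurable_pi_apply l).comp ((measurable_pi_apply i).comp hGlim)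
    have h2 : Measurable fun M : Matrix (Fin r) (Fin n) ℝ => M l j :=
      (measurable_pi_apply j).comp (measurable_pi_apply l)
    exact h1.mul h2
  · intro M Z hz1 hz2 hz3 hz4
    have ht := penroseTendsto (M * X) Z hz1 hz2 hz3 hz4
    have hmem : M ∈ E := ⟨Z, ht⟩
    have : Glim M = Z := by
      rw [hGdef]
      simp only [dif_pos hmem]
      exact tendsto_nhds_unique hmem.choose_spec ht
    show Glim M * M = Z * M
    rw [this]

lemma l2mul {Ω : Type*} [MeasurableSpace Ω] {μ : Measure Ω} {f g : Ω → ℝ}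
    (hf : MemLp f 2 μ) (hg : MemLp g 2 μ) : Integrable (fun ω => f ω * g ω) μ := by
  have hpq : (1 : ENNReal) / 1 = 1 / 2 + 1 / 2 := by
    rw [one_div_one, ENNReal.div_add_div_same]
    norm_num
    rw [ENNReal.div_self] <;> norm_num
  have h : MemLp (f • g) 1 μ := MemLp.smul hg hf
  have h2 := memLp_one_iff_integrable.mp h
  exact h2.congr (Eventually.of_forall fun ω => by simp [Pi.smul_apply', smul_eq_mul])

lemma rankDetUnit {n p : ℕ} (X : Matrix (Fin n) (Fin p) ℝ) (hX : X.rank = p) :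
    IsUnit (Xᵀ * X).det := by
  have h1 : (Xᵀ * X).rank = p := by rw [Matrix.rank_transpose_mul_self, hX]
  have h2 : LinearMap.range (Xᵀ * X).mulVecLin = ⊤ := by
    apply Submodule.eq_top_of_finrank_eq
    rw [← Matrix.rank, h1, Module.finrank_fintype_fun_eq_card, Fintype.card_fin]
  have h3 : Function.Surjective (Xᵀ * X).mulVec := by
    intro v
    have hv : v ∈ LinearMap.range (Xᵀ * X).mulVecLin := h2 ▸ Submodule.mem_top
    obtain ⟨w, hw⟩ := hv
    exact ⟨w, by rw [← Matrix.mulVecLin_apply]; exact hw⟩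
  exact Matrix.isUnit_iff_isUnit_det _ |>.mp (Matrix.mulVec_surjective_iff_isUnit.mp h3)

/-- total variance of the sketched solution: with a random sketching
matrix `S`, `Y(ω) = (S(ω)X)†`, `P(ω) = X Y(ω) S(ω)`, `P₀(ω) = Y(ω) S(ω) X`, and noise
`ε` independent of `S` with mean zero and covariance `σ² I_n`, the covariance matrix of
`β̃ = Y S (Xβ₀ + ε)` equals `σ² X† E[PPᵀ] (X†)ᵀ + V[P₀β₀]`, equivalently
`σ²(XᵀX)⁻¹ + σ² X†(E[PPᵀ] - P_X)(X†)ᵀ + V[P₀β₀]`. -/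
theorem sketched_solution_total_variance
    {n p r : ℕ} (X : Matrix (Fin n) (Fin p) ℝ) (hX : X.rank = p)
    (hpr : p ≤ r) (hrn : r ≤ n)
    (Xd : Matrix (Fin p) (Fin n) ℝ) (hXd : Xd = (Xᵀ * X)⁻¹ * Xᵀ)
    (PX : Matrix (Fin n) (Fin n) ℝ) (hPX : PX = X * (Xᵀ * X)⁻¹ * Xᵀ)
    {Ω : Type*} [MeasurableSpace Ω] (μ : Measure Ω) [IsProbabilityMeasure μ]
    (S : Ω → Matrix (Fin r) (Fin n) ℝ)
    (Y : Ω → Matrix (Fin p) (Fin r) ℝ)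
    (hp1 : ∀ ω, (S ω * X) * Y ω * (S ω * X) = S ω * X)
    (hp2 : ∀ ω, Y ω * ((S ω * X) * Y ω) = Y ω)
    (hp3 : ∀ ω, ((S ω * X) * Y ω)ᵀ = (S ω * X) * Y ω)
    (hp4 : ∀ ω, (Y ω * (S ω * X))ᵀ = Y ω * (S ω * X))
    (P : Ω → Matrix (Fin n) (Fin n) ℝ) (hP : ∀ ω, P ω = X * Y ω * S ω)
    (P0 : Ω → Matrix (Fin p) (Fin p) ℝ) (hP0 : ∀ ω, P0 ω = Y ω * (S ω * X))
    (β₀ : Fin p → ℝ) (σ : ℝ) (hσ : 0 < σ) (ε : Ω → Fin n → ℝ)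
    (hindep : ProbabilityTheory.IndepFun ε
      ((fun ω i j => S ω i j) : Ω → Fin r → Fin n → ℝ) μ)
    (hεL2 : ∀ i, MemLp (fun ω => ε ω i) 2 μ)
    (hεmean : ∀ i, ∫ ω, ε ω i ∂μ = 0)
    (hεcov : ∀ i j, ∫ ω, ε ω i * ε ω j ∂μ = if i = j then σ ^ 2 else 0)
    (hYSL2 : ∀ i j, MemLp (fun ω => (Y ω * S ω) i j) 2 μ)
    (hPPTint : ∀ i j, Integrable (fun ω => (P ω * (P ω)ᵀ) i j) μ)
    (EPPT : Matrix (Fin n) (Fin n) ℝ)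
    (hEPPT : ∀ i j, EPPT i j = ∫ ω, (P ω * (P ω)ᵀ) i j ∂μ)
    (VP0 : Matrix (Fin p) (Fin p) ℝ)
    (hVP0 : ∀ k l, VP0 k l =
      (∫ ω, (P0 ω *ᵥ β₀) k * (P0 ω *ᵥ β₀) l ∂μ) -
        (∫ ω, (P0 ω *ᵥ β₀) k ∂μ) * (∫ ω, (P0 ω *ᵥ β₀) l ∂μ))
    (βtilde : Ω → Fin p → ℝ)
    (hβtilde : ∀ ω, βtilde ω = Y ω *ᵥ (S ω *ᵥ (X *ᵥ β₀ + ε ω))) :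
    (∀ k l, (∫ ω, βtilde ω k * βtilde ω l ∂μ) -
        (∫ ω, βtilde ω k ∂μ) * (∫ ω, βtilde ω l ∂μ) =
      (σ ^ 2 • (Xd * EPPT * Xdᵀ) + VP0) k l) ∧
    (∀ k l, (∫ ω, βtilde ω k * βtilde ω l ∂μ) -
        (∫ ω, βtilde ω k ∂μ) * (∫ ω, βtilde ω l ∂μ) =
      (σ ^ 2 • ((Xᵀ * X)⁻¹ : Matrix (Fin p) (Fin p) ℝ) +
        σ ^ 2 • (Xd * (EPPT - PX) * Xdᵀ) + VP0) k l) := by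
  classical
  -- invertibility facts
  have hdet : IsUnit (Xᵀ * X).det := rankDetUnit X hX
  have hinv1 : (Xᵀ * X)⁻¹ * (Xᵀ * X) = 1 := Matrix.nonsing_inv_mul _ hdet
  have hXdX : Xd * X = 1 := by rw [hXd, Matrix.mul_assoc, hinv1]
  have hXdT : Xdᵀ = X * (Xᵀ * X)⁻¹ := by
    simp [hXd, Matrix.transpose_mul, Matrix.transpose_nonsing_inv]
  have hcan : ∀ {q : ℕ} (M : Matrix (Fin p) (Fin q) ℝ),
      (Xᵀ * X)⁻¹ * (Xᵀ * (X * M)) = M := by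
    intro q M
    rw [← Matrix.mul_assoc Xᵀ X M, ← Matrix.mul_assoc, hinv1, Matrix.one_mul]
  have hXdPX : Xd * PX = Xd := by
    simp only [hXd, hPX, Matrix.mul_assoc]
    rw [hcan]
  have hXdXd : Xd * Xdᵀ = (Xᵀ * X)⁻¹ := by
    rw [hXdT, hXd]
    simp only [Matrix.mul_assoc]
    rw [hcan]
  -- the sketching product G = Y S as a measurable function of S, independence
  obtain ⟨ψ, hψmeas, hψeq⟩ := existsMeasurablePinv (r := r) X
  set G : Ω → Matrix (Fin p) (Fin n) ℝ := fun ω => Y ω * S ω with hGdef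
  have hψS : ∀ ω, ψ (S ω) = G ω := fun ω => hψeq (S ω) (Y ω) (hp1 ω) (hp2 ω) (hp3 ω) (hp4 ω)
  have hindepG : ProbabilityTheory.IndepFun ε G μ := by
    have h := hindep.comp measurable_id hψmeas
    have heq : (ψ ∘ ((fun ω i j => S ω i j) : Ω → Fin r → Fin n → ℝ)) = G := funext fun ω => hψS ω
    rw [← heq]
    exact h
  -- basic L² and integrability facts
  have hG2 : ∀ k t, MemLp (fun ω => G ω k t) 2 μ := fun k t => hYSL2 k t
  have hGint : ∀ k t, Integrable (fun ω => G ω k t) μ := fun k t => (hG2 k t).integrable one_le_two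
  have hεint : ∀ t, Integrable (fun ω => ε ω t) μ := fun t => (hεL2 t).integrable one_le_two
  have hGG : ∀ k s l t, Integrable (fun ω => G ω k s * G ω l t) μ :=
    fun k s l t => l2mul (hG2 k s) (hG2 l t)
  have hGε : ∀ k s t, Integrable (fun ω => G ω k s * ε ω t) μ :=
    fun k s t => l2mul (hG2 k s) (hεL2 t)
  have hεε : ∀ s t, Integrable (fun ω => ε ω s * ε ω t) μ :=
    fun s t => l2mul (hεL2 s) (hεL2 t)
  set c : Fin n → ℝ := X *ᵥ β₀ with hcvec
  set u : Fin p → Ω → ℝ := fun k ω => ∑ t, c t * G ω k t with hudef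
  set v : Fin p → Ω → ℝ := fun k ω => ∑ t, G ω k t * ε ω t with hvdef
  have hu2 : ∀ k, MemLp (u k) 2 μ := by
    intro k
    have hfun : u k = ∑ t : Fin n, (fun ω => c t * G ω k t) := by
      funext ω
      simp [Finset.sum_apply, hudef]
    rw [hfun]
    exact memLp_finset_sum' _ (fun t _ => (hG2 k t).const_mul (c t))
  have huint : ∀ k, Integrable (u k) μ := fun k => (hu2 k).integrable one_le_two
  have hvint : ∀ k, Integrable (v k) μ := fun k =>
    integrable_finset_sum _ (fun t _ => hGε k t t)
  have huu : ∀ k l, Integrable (fun ω => u k ω * u l ω) μ :=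
    fun k l => l2mul (hu2 k) (hu2 l)
  -- decomposition of βtilde
  have hbeta : ∀ ω k, βtilde ω k = u k ω + v k ω := by
    intro ω k
    rw [hβtilde, Matrix.mulVec_mulVec, Matrix.mulVec_add, Pi.add_apply]
    show ((Y ω * S ω) *ᵥ c) k + ((Y ω * S ω) *ᵥ (ε ω)) k = u k ω + v k ω
    have h1 : ((Y ω * S ω) *ᵥ c) k = u k ω := by
      simp only [Matrix.mulVec, dotProduct, hudef]
      exact Finset.sum_congr rfl fun t _ => mul_comm _ _
    have h2 : ((Y ω * S ω) *ᵥ (ε ω)) k = v k ω := rfl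
    rw [h1, h2]
  have haeq : ∀ ω k, (P0 ω *ᵥ β₀) k = u k ω := by
    intro ω k
    rw [hP0, ← Matrix.mul_assoc, ← Matrix.mulVec_mulVec]
    show ((Y ω * S ω) *ᵥ (X *ᵥ β₀)) k = u k ω
    simp only [Matrix.mulVec, dotProduct, hudef, hcvec]
    exact Finset.sum_congr rfl fun t _ => mul_comm _ _
  -- measurability helpers for evaluations
  have hmG : ∀ (k : Fin p) (t : Fin n),
      Measurable (fun g : Matrix (Fin p) (Fin n) ℝ => g k t) :=
    fun k t => (measurable_pi_apply t).comp (measurable_pi_apply k)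
  have hmE : ∀ (t : Fin n), Measurable (fun e : Fin n → ℝ => e t) :=
    fun t => measurable_pi_apply t
  -- zero expectation of the noise part
  have hvij : ∀ k t s, ∫ ω, G ω k t * ε ω s ∂μ = 0 := by
    intro k t s
    have hI : ProbabilityTheory.IndepFun (fun ω => G ω k t) (fun ω => ε ω s) μ :=
      (hindepG.comp (hmE s) (hmG k t)).symm
    have h := hI.integral_fun_mul_eq_mul_integral (hGint k t).aestronglyMeasurable (hεint s).aestronglyMeasurable
    have h2 : ∫ ω, G ω k t * ε ω s ∂μ = (∫ ω, G ω k t ∂μ) * ∫ ω, ε ω s ∂μ := h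
    rw [h2, hεmean, mul_zero]
  have hEv : ∀ k, ∫ ω, v k ω ∂μ = 0 := by
    intro k
    have : ∫ ω, v k ω ∂μ = ∑ t, ∫ ω, G ω k t * ε ω t ∂μ :=
      integral_finset_sum _ (fun t _ => hGε k t t)
    rw [this]
    simp [hvij]
  have hEbeta : ∀ k, ∫ ω, βtilde ω k ∂μ = ∫ ω, u k ω ∂μ := by
    intro k
    have h : (fun ω => βtilde ω k) = fun ω => u k ω + v k ω := funext fun ω => hbeta ω k
    rw [h, integral_add (huint k) (hvint k), hEv, add_zero]
  -- cross terms vanish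
  have huvterm : ∀ k l t, Integrable (fun ω => (u k ω * G ω l t) * ε ω t) μ := by
    intro k l t
    have hI : ProbabilityTheory.IndepFun (fun ω => u k ω * G ω l t) (fun ω => ε ω t) μ := by
      have hm : Measurable (fun g : Matrix (Fin p) (Fin n) ℝ => (∑ s, c s * g k s) * g l t) :=
        (Finset.measurable_sum _ (fun s _ => (hmG k s).const_mul (c s))).mul (hmG l t)
      exact (hindepG.comp (hmE t) hm).symm
    have h := hI.integrable_mul (l2mul (hu2 k) (hG2 l t)) (hεint t)
    exact h
  have huv : ∀ k l, ∫ ω, u k ω * v l ω ∂μ = 0 := by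
    intro k l
    have hpt : (fun ω => u k ω * v l ω) = fun ω => ∑ t, (u k ω * G ω l t) * ε ω t := by
      funext ω
      show u k ω * (∑ t, G ω l t * ε ω t) = _
      rw [Finset.mul_sum]
      exact Finset.sum_congr rfl fun t _ => by ring
    rw [hpt, integral_finset_sum _ (fun t _ => huvterm k l t)]
    apply Finset.sum_eq_zero
    intro t _
    have hI : ProbabilityTheory.IndepFun (fun ω => u k ω * G ω l t) (fun ω => ε ω t) μ := by
      have hm : Measurable (fun g : Matrix (Fin p) (Fin n) ℝ => (∑ s, c s * g k s) * g l t) :=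
        (Finset.measurable_sum _ (fun s _ => (hmG k s).const_mul (c s))).mul (hmG l t)
      exact (hindepG.comp (hmE t) hm).symm
    have h : ∫ ω, (u k ω * G ω l t) * ε ω t ∂μ
        = (∫ ω, u k ω * G ω l t ∂μ) * ∫ ω, ε ω t ∂μ :=
      hI.integral_fun_mul_eq_mul_integral (l2mul (hu2 k) (hG2 l t)).aestronglyMeasurable (hεint t).aestronglyMeasurable
    rw [h, hεmean, mul_zero]
  have huvint : ∀ k l, Integrable (fun ω => u k ω * v l ω) μ := by
    intro k l
    have hpt : (fun ω => u k ω * v l ω) = fun ω => ∑ t, (u k ω * G ω l t) * ε ω t := by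
      funext ω
      show u k ω * (∑ t, G ω l t * ε ω t) = _
      rw [Finset.mul_sum]
      exact Finset.sum_congr rfl fun t _ => by ring
    rw [hpt]
    exact integrable_finset_sum _ (fun t _ => huvterm k l t)
  -- quadratic noise term
  have hvvterm : ∀ k l s t, Integrable (fun ω => (G ω k s * G ω l t) * (ε ω s * ε ω t)) μ := by
    intro k l s t
    have hI : ProbabilityTheory.IndepFun (fun ω => G ω k s * G ω l t)
        (fun ω => ε ω s * ε ω t) μ := by
      have hm1 : Measurable (fun g : Matrix (Fin p) (Fin n) ℝ => g k s * g l t) :=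
        (hmG k s).mul (hmG l t)
      have hm2 : Measurable (fun e : Fin n → ℝ => e s * e t) := (hmE s).mul (hmE t)
      exact (hindepG.comp hm2 hm1).symm
    exact hI.integrable_mul (hGG k s l t) (hεε s t)
  have hvvfact : ∀ k l s t, ∫ ω, (G ω k s * G ω l t) * (ε ω s * ε ω t) ∂μ
      = (∫ ω, G ω k s * G ω l t ∂μ) * (if s = t then σ ^ 2 else 0) := by
    intro k l s t
    have hI : ProbabilityTheory.IndepFun (fun ω => G ω k s * G ω l t)
        (fun ω => ε ω s * ε ω t) μ := by
      have hm1 : Measurable (fun g : Matrix (Fin p) (Fin n) ℝ => g k s * g l t) :=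
        (hmG k s).mul (hmG l t)
      have hm2 : Measurable (fun e : Fin n → ℝ => e s * e t) := (hmE s).mul (hmE t)
      exact (hindepG.comp hm2 hm1).symm
    have h : ∫ ω, (G ω k s * G ω l t) * (ε ω s * ε ω t) ∂μ
        = (∫ ω, G ω k s * G ω l t ∂μ) * ∫ ω, ε ω s * ε ω t ∂μ :=
      hI.integral_fun_mul_eq_mul_integral (hGG k s l t).aestronglyMeasurable (hεε s t).aestronglyMeasurable
    rw [h, hεcov]
  have hvvint : ∀ k l, Integrable (fun ω => v k ω * v l ω) μ := by
    intro k l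
    have hpt : (fun ω => v k ω * v l ω)
        = fun ω => ∑ s, ∑ t, (G ω k s * G ω l t) * (ε ω s * ε ω t) := by
      funext ω
      show (∑ s, G ω k s * ε ω s) * (∑ t, G ω l t * ε ω t) = _
      rw [Finset.sum_mul_sum]
      exact Finset.sum_congr rfl fun s _ => Finset.sum_congr rfl fun t _ => by ring
    rw [hpt]
    exact integrable_finset_sum _ (fun s _ =>
      integrable_finset_sum _ (fun t _ => hvvterm k l s t))
  have hvv : ∀ k l, ∫ ω, v k ω * v l ω ∂μ
      = σ ^ 2 * ∑ s, ∫ ω, G ω k s * G ω l s ∂μ := by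
    intro k l
    have hpt : (fun ω => v k ω * v l ω)
        = fun ω => ∑ s, ∑ t, (G ω k s * G ω l t) * (ε ω s * ε ω t) := by
      funext ω
      show (∑ s, G ω k s * ε ω s) * (∑ t, G ω l t * ε ω t) = _
      rw [Finset.sum_mul_sum]
      exact Finset.sum_congr rfl fun s _ => Finset.sum_congr rfl fun t _ => by ring
    rw [hpt, integral_finset_sum _ (fun s _ =>
      integrable_finset_sum _ (fun t _ => hvvterm k l s t))]
    have : ∀ s, ∫ ω, (∑ t, (G ω k s * G ω l t) * (ε ω s * ε ω t)) ∂μ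
        = (∫ ω, G ω k s * G ω l s ∂μ) * σ ^ 2 := by
      intro s
      rw [integral_finset_sum _ (fun t _ => hvvterm k l s t)]
      have h1 : ∀ t, ∫ ω, (G ω k s * G ω l t) * (ε ω s * ε ω t) ∂μ
          = (∫ ω, G ω k s * G ω l t ∂μ) * (if s = t then σ ^ 2 else 0) := hvvfact k l s
      simp only [h1, mul_ite, mul_zero]
      rw [Finset.sum_ite_eq]
      simp
    simp only [this]
    rw [← Finset.sum_mul, mul_comm]
  -- main second-moment formula
  have hprod : ∀ k l, ∫ ω, βtilde ω k * βtilde ω l ∂μ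
      = (∫ ω, u k ω * u l ω ∂μ) + σ ^ 2 * ∑ s, ∫ ω, G ω k s * G ω l s ∂μ := by
    intro k l
    have hpt : (fun ω => βtilde ω k * βtilde ω l)
        = fun ω => (u k ω * u l ω + u k ω * v l ω) + (u l ω * v k ω + v k ω * v l ω) := by
      funext ω
      rw [hbeta ω k, hbeta ω l]
      ring
    calc ∫ ω, βtilde ω k * βtilde ω l ∂μ
        = ∫ ω, ((u k ω * u l ω + u k ω * v l ω) + (u l ω * v k ω + v k ω * v l ω)) ∂μ := by
          rw [hpt]
      _ = (∫ ω, u k ω * u l ω ∂μ) + (∫ ω, u k ω * v l ω ∂μ)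
          + ((∫ ω, u l ω * v k ω ∂μ) + ∫ ω, v k ω * v l ω ∂μ) := by
          have h12 : Integrable (fun ω => u k ω * u l ω + u k ω * v l ω) μ :=
            (huu k l).add (huvint k l)
          have h34 : Integrable (fun ω => u l ω * v k ω + v k ω * v l ω) μ :=
            (huvint l k).add (hvvint k l)
          rw [integral_add h12 h34, integral_add (huu k l) (huvint k l),
            integral_add (huvint l k) (hvvint k l)]
      _ = (∫ ω, u k ω * u l ω ∂μ) + σ ^ 2 * ∑ s, ∫ ω, G ω k s * G ω l s ∂μ := by
          rw [huv k l, huv l k, hvv k l]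
          ring
  -- identification of VP0
  have hVP0' : ∀ k l, VP0 k l
      = (∫ ω, u k ω * u l ω ∂μ) - (∫ ω, u k ω ∂μ) * ∫ ω, u l ω ∂μ := by
    intro k l
    rw [hVP0]
    congr 1
    · congr 1
      funext ω
      rw [haeq ω k, haeq ω l]
    · congr 1 <;> · congr 1; funext ω; rw [haeq]
  -- identification of the sandwич matrix entry
  have hsand : ∀ k l, (Xd * EPPT * Xdᵀ) k l = ∑ s, ∫ ω, G ω k s * G ω l s ∂μ := by
    intro k l
    have hXdP : ∀ ω, Xd * (P ω * (P ω)ᵀ) * Xdᵀ = G ω * (G ω)ᵀ := by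
      intro ω
      have h1 : Xd * P ω = G ω := by
        rw [hP, hXd]
        simp only [Matrix.mul_assoc]
        rw [hcan]
      calc Xd * (P ω * (P ω)ᵀ) * Xdᵀ = (Xd * P ω) * ((P ω)ᵀ * Xdᵀ) := by
            simp only [Matrix.mul_assoc]
        _ = (Xd * P ω) * (Xd * P ω)ᵀ := by rw [← Matrix.transpose_mul]
        _ = G ω * (G ω)ᵀ := by rw [h1]
    have hterm : ∀ (a b : Fin n), Integrable
        (fun ω => Xd k a * (P ω * (P ω)ᵀ) a b * Xd l b) μ :=
      fun a b => (((hPPTint a b).const_mul (Xd k a)).mul_const (Xd l b))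
    calc (Xd * EPPT * Xdᵀ) k l
        = ∑ b, (∑ a, Xd k a * EPPT a b) * Xdᵀ b l := by
          simp [Matrix.mul_apply]
      _ = ∑ b, ∑ a, ∫ ω, Xd k a * (P ω * (P ω)ᵀ) a b * Xd l b ∂μ := by
          apply Finset.sum_congr rfl
          intro b _
          rw [Finset.sum_mul]
          apply Finset.sum_congr rfl
          intro a _
          rw [hEPPT, Matrix.transpose_apply]
          rw [← integral_const_mul, ← integral_mul_const]
      _ = ∫ ω, ∑ b, ∑ a, Xd k a * (P ω * (P ω)ᵀ) a b * Xd l b ∂μ := by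
          rw [integral_finset_sum _ (fun b _ => integrable_finset_sum _ (fun a _ => hterm a b))]
          exact Finset.sum_congr rfl fun b _ =>
            (integral_finset_sum _ (fun a _ => hterm a b)).symm
      _ = ∫ ω, (G ω * (G ω)ᵀ) k l ∂μ := by
          apply integral_congr_ae
          filter_upwards with ω
          rw [← hXdP ω]
          simp [Matrix.mul_apply, Finset.sum_mul, Finset.mul_sum]
      _ = ∑ s, ∫ ω, G ω k s * G ω l s ∂μ := by
          rw [← integral_finset_sum _ (fun s _ => hGG k s l s)]
          apply integral_congr_ae
          filter_upwards with ω
          simp [Matrix.mul_apply]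
  -- first statement
  have main : ∀ k l, (∫ ω, βtilde ω k * βtilde ω l ∂μ) -
      (∫ ω, βtilde ω k ∂μ) * (∫ ω, βtilde ω l ∂μ)
      = (σ ^ 2 • (Xd * EPPT * Xdᵀ) + VP0) k l := by
    intro k l
    rw [hprod k l, hEbeta k, hEbeta l]
    simp only [Matrix.add_apply, Matrix.smul_apply, smul_eq_mul]
    rw [hsand k l, hVP0' k l]
    ring
  refine ⟨main, ?_⟩
  have hmat : σ ^ 2 • ((Xᵀ * X)⁻¹ : Matrix (Fin p) (Fin p) ℝ)
      + σ ^ 2 • (Xd * (EPPT - PX) * Xdᵀ) + VP0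
      = σ ^ 2 • (Xd * EPPT * Xdᵀ) + VP0 := by
    have h1 : Xd * (EPPT - PX) * Xdᵀ = Xd * EPPT * Xdᵀ - (Xᵀ * X)⁻¹ := by
      rw [Matrix.mul_sub, Matrix.sub_mul]
      congr 1
      rw [hXdPX, hXdXd]
    rw [h1, smul_sub]
    abel
  intro k l
  rw [← hmat] at main
  exact main k l
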